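/- For an n×n matrix A over ℂ and X ∈ ℂⁿ with i.i.d. coordinates uniform on the unit circle, |perm(A)| ≤ E[(‖AX‖₁/n)ⁿ]. -/

import Mathlib

open MeasureTheory

/-- The permanent of a complex square matrix. -/
noncomputable def perm {n : ℕ} (A : Matrix (Fin n) (Fin n) ℂ) : ℂ :=
  ∑ σ : Equiv.Perm (Fin n), ∏ i, A i (σ i)

/-- The operator 2-norm of a complex square matrix. -/
noncomputable def opNorm {n : ℕ} (A : Matrix (Fin n) (Fin n) ℂ) : ℝ :=
  ‖LinearMap.toContinuousLinearMap (Matrix.toEuclideanLin A)‖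

/-- Uniform probability measure parametrizing `n` i.i.d. points of the unit circle. -/
noncomputable def circleMeasure (n : ℕ) : Measure (Fin n → ℝ) :=
  Measure.pi fun _ => volume.restrict (Set.Icc 0 1)

/-- The random vector with i.i.d. coordinates uniform on the unit circle. -/
noncomputable def Xc {n : ℕ} (θ : Fin n → ℝ) : Fin n → ℂ :=
  fun i => Complex.exp (2 * Real.pi * Complex.I * (θ i))

/-! ### Auxiliary setup -/

instance : IsProbabilityMeasure ((volume : Measure ℝ).restrict (Set.Icc 0 1)) := by
  constructor
  simp [Real.volume_Icc]

/-- Type synonym for `ℝ` equipped with `volume.restrict (Icc 0 1)`, so that `circleMeasure n`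
is (definitionally) the `volume` on `Fin n → UI` and product-integral lemmas apply. -/
def UI : Type := ℝ

noncomputable instance : MeasurableSpace UI := inferInstanceAs (MeasurableSpace ℝ)
noncomputable instance : MeasureSpace UI :=
  ⟨(volume : Measure ℝ).restrict (Set.Icc 0 1)⟩
instance : SigmaFinite (volume : Measure UI) :=
  inferInstanceAs (SigmaFinite ((volume : Measure ℝ).restrict (Set.Icc 0 1)))
instance : IsProbabilityMeasure (volume : Measure UI) :=
  inferInstanceAs (IsProbabilityMeasure ((volume : Measure ℝ).restrict (Set.Icc 0 1)))

instance (n : ℕ) : IsProbabilityMeasure (circleMeasure n) :=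
  inferInstanceAs (IsProbabilityMeasure (volume : Measure (Fin n → UI)))

/-- `e^{2πit}`. -/
noncomputable def ez (t : ℝ) : ℂ := Complex.exp (2 * Real.pi * Complex.I * t)

/-- The one-coordinate factor `e^{2πit·m}·conj(e^{2πit})`. -/
noncomputable def G (m : ℕ) (t : ℝ) : ℂ := ez t ^ m * (starRingEnd ℂ) (ez t)

lemma ez_measurable : Measurable ez :=
  Complex.measurable_exp.comp (measurable_const.mul Complex.measurable_ofReal)

lemma abs_ez (t : ℝ) : ‖ez t‖ = 1 := by
  rw [ez, show (2 * Real.pi * Complex.I * t : ℂ) = (2 * Real.pi * t : ℝ) * Complex.I by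
    push_cast; ring]
  exact Complex.norm_exp_ofReal_mul_I _

lemma G_eq (m : ℕ) (t : ℝ) :
    G m t = Complex.exp (2 * Real.pi * Complex.I * (((m : ℤ) - 1 : ℤ) : ℂ) * t) := by
  rw [G, ez, ← Complex.exp_nat_mul, ← Complex.exp_conj, ← Complex.exp_add]
  congr 1
  simp only [map_mul, Complex.conj_I, Complex.conj_ofReal, map_ofNat]
  push_cast
  ring

lemma int_exp (k : ℤ) :
    ∫ t : UI, (fun s : ℝ => Complex.exp (2 * Real.pi * Complex.I * k * s)) t =
      if k = 0 then 1 else 0 := by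
  have h0 : (∫ t : UI, (fun s : ℝ => Complex.exp (2 * Real.pi * Complex.I * k * s)) t)
      = ∫ t in Set.Icc (0:ℝ) 1, Complex.exp (2 * Real.pi * Complex.I * k * t) := rfl
  rw [h0, MeasureTheory.integral_Icc_eq_integral_Ioc,
    ← intervalIntegral.integral_of_le (zero_le_one)]
  by_cases hk : k = 0
  · simp [hk]
  · have hc : (2 * Real.pi * Complex.I * k : ℂ) ≠ 0 := by
      simp [Real.pi_ne_zero, Complex.I_ne_zero, hk]
    simp only [hk, if_false]
    rw [integral_exp_mul_complex hc]
    have : Complex.exp (2 * Real.pi * Complex.I * k * ((1:ℝ):ℂ)) = 1 := by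
      rw [show (2 * Real.pi * Complex.I * k * ((1:ℝ):ℂ) : ℂ) = k * (2 * Real.pi * Complex.I) by
        push_cast; ring]
      exact Complex.exp_int_mul_two_pi_mul_I k
    rw [this]
    simp

lemma int_G (m : ℕ) : ∫ t : UI, G m t = if m = 1 then 1 else 0 := by
  have : (∫ t : UI, G m t)
      = ∫ t : UI, (fun s : ℝ =>
          Complex.exp (2 * Real.pi * Complex.I * (((m : ℤ) - 1 : ℤ) : ℂ) * s)) t := by
    congr 1
    funext t
    exact G_eq m t
  rw [this, int_exp ((m : ℤ) - 1)]
  have : ((m : ℤ) - 1 = 0) ↔ (m = 1) := by omega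
  simp [this]

lemma G_integrable (m : ℕ) : Integrable (fun t : UI => G m t) := by
  have hm : Measurable (G m) :=
    ((ez_measurable.pow_const m)).mul (Complex.continuous_conj.measurable.comp ez_measurable)
  refine Integrable.mono' (integrable_const 1) (hm.aestronglyMeasurable (α := UI)) ?_
  filter_upwards with t
  show ‖G m t‖ ≤ 1
  unfold G
  simp only [norm_mul, norm_pow, Complex.norm_conj, abs_ez, one_pow, mul_one]
  simp only [abs_ez t, one_pow, mul_one, le_refl]

/-- AM–GM: the product of nonnegative reals is at most the `n`-th power of their mean. -/
lemma amgm {n : ℕ} (y : Fin n → ℝ) (hy : ∀ i, 0 ≤ y i) :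
    ∏ i, y i ≤ ((∑ i, y i) / n) ^ n := by
  rcases Nat.eq_zero_or_pos n with hn | hn
  · subst hn; simp
  have hn' : (n : ℝ) ≠ 0 := Nat.cast_ne_zero.2 hn.ne'
  have h := Real.geom_mean_le_arith_mean_weighted Finset.univ (fun _ => 1 / n) y
    (fun _ _ => by positivity) (by simp; field_simp) (fun i _ => hy i)
  have h2 : (∏ i, y i ^ (1 / n : ℝ)) ^ n ≤ ((∑ i, y i) / n) ^ n := by
    apply pow_le_pow_left₀ (Finset.prod_nonneg fun i _ => Real.rpow_nonneg (hy i) _)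
    refine h.trans_eq ?_
    simp only [Finset.sum_div]
    exact Finset.sum_congr rfl fun i _ => by ring
  calc ∏ i, y i = (∏ i, y i ^ (1 / n : ℝ)) ^ n := by
        rw [← Finset.prod_pow]
        refine Finset.prod_congr rfl fun i _ => ?_
        rw [← Real.rpow_natCast (y i ^ (1/n : ℝ)), ← Real.rpow_mul (hy i)]
        rw [one_div, inv_mul_cancel₀ hn', Real.rpow_one]
    _ ≤ _ := h2

lemma fiber_card_bij {n : ℕ} (f : Fin n → Fin n) :
    (∀ j, (Finset.univ.filter fun i => f i = j).card = 1) ↔ Function.Bijective f := by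
  rw [Function.bijective_iff_existsUnique]
  apply forall_congr'
  intro j
  rw [Finset.card_eq_one]
  constructor
  · rintro ⟨a, ha⟩
    have h1 : f a = j := by
      have := Finset.mem_singleton_self a; rw [← ha, Finset.mem_filter] at this; exact this.2
    refine ⟨a, h1, fun b hb => ?_⟩
    have : b ∈ Finset.univ.filter fun i => f i = j :=
      Finset.mem_filter.2 ⟨Finset.mem_univ _, hb⟩
    rw [ha, Finset.mem_singleton] at this; exact this
  · rintro ⟨a, ha, hu⟩
    exact ⟨a, Finset.eq_singleton_iff_unique_mem.2 ⟨Finset.mem_filter.2 ⟨Finset.mem_univ _, ha⟩,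
      fun b hb => hu b (Finset.mem_filter.1 hb).2⟩⟩

lemma hpt {n : ℕ} (A : Matrix (Fin n) (Fin n) ℂ) (θ : Fin n → ℝ) :
    (∏ i, (starRingEnd ℂ) (Xc θ i) * (A.mulVec (Xc θ)) i)
      = ∑ f : Fin n → Fin n, (∏ i, A i (f i)) *
          ∏ j, G ((Finset.univ.filter fun i => f i = j).card) (θ j) := by
  classical
  have h1 : ∀ i : Fin n, (starRingEnd ℂ) (Xc θ i) * (A.mulVec (Xc θ)) i
      = ∑ j, A i j * (ez (θ j) * (starRingEnd ℂ) (ez (θ i))) := by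
    intro i
    show (starRingEnd ℂ) (ez (θ i)) * (∑ j, A i j * ez (θ j)) = _
    rw [Finset.mul_sum]; exact Finset.sum_congr rfl fun j _ => by ring
  calc (∏ i, (starRingEnd ℂ) (Xc θ i) * (A.mulVec (Xc θ)) i)
      = ∏ i, ∑ j, A i j * (ez (θ j) * (starRingEnd ℂ) (ez (θ i))) :=
        Finset.prod_congr rfl fun i _ => h1 i
    _ = ∑ f ∈ Fintype.piFinset (fun _ : Fin n => (Finset.univ : Finset (Fin n))),
          ∏ i, A i (f i) * (ez (θ (f i)) * (starRingEnd ℂ) (ez (θ i))) :=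
        Finset.prod_univ_sum _ _
    _ = ∑ f : Fin n → Fin n, (∏ i, A i (f i)) *
          ∏ j, G ((Finset.univ.filter fun i => f i = j).card) (θ j) := by
        rw [Fintype.piFinset_univ]
        refine Finset.sum_congr rfl fun f _ => ?_
        rw [Finset.prod_mul_distrib]
        congr 1
        rw [Finset.prod_mul_distrib]
        have h2 : (∏ i, ez (θ (f i)))
            = ∏ j, ez (θ j) ^ (Finset.univ.filter fun i => f i = j).card := by
          rw [← Finset.prod_fiberwise Finset.univ f (fun i => ez (θ (f i)))]
          refine Finset.prod_congr rfl fun j _ => ?_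
          rw [Finset.prod_congr rfl (fun i hi => ?_), Finset.prod_const]
          rw [(Finset.mem_filter.1 hi).2]
        rw [h2, ← Finset.prod_mul_distrib]
        rfl

lemma sum_bijective_eq_perm {n : ℕ} (A : Matrix (Fin n) (Fin n) ℂ) :
    ∑ f : Fin n → Fin n, (∏ i, A i (f i)) * (if Function.Bijective f then (1:ℂ) else 0)
      = perm A := by
  classical
  simp only [mul_ite, mul_one, mul_zero]
  rw [← Finset.sum_filter, perm]
  refine Finset.sum_bij' (fun f hf => Equiv.ofBijective f (Finset.mem_filter.1 hf).2)
    (fun σ _ => ⇑σ) ?_ ?_ ?_ ?_ ?_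
  · intro f hf; exact Finset.mem_univ _
  · intro σ _
    exact Finset.mem_filter.2 ⟨Finset.mem_univ _, σ.bijective⟩
  · intro f hf; rfl
  · intro σ _; ext x; rfl
  · intro f hf; rfl

lemma key {n : ℕ} (A : Matrix (Fin n) (Fin n) ℂ) :
    (∫ θ, ∏ i, (starRingEnd ℂ) (Xc θ i) * (A.mulVec (Xc θ)) i ∂(circleMeasure n)) = perm A := by
  classical
  have hint : ∀ f : Fin n → Fin n, Integrable (fun θ : Fin n → ℝ =>
      (∏ i, A i (f i)) *
        ∏ j, G ((Finset.univ.filter fun i => f i = j).card) (θ j)) (circleMeasure n) := by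
    intro f
    exact (MeasureTheory.Integrable.fintype_prod (E := UI)
      (f := fun j => G ((Finset.univ.filter fun i => f i = j).card))
      (fun j => G_integrable _)).const_mul _
  calc (∫ θ, ∏ i, (starRingEnd ℂ) (Xc θ i) * (A.mulVec (Xc θ)) i ∂(circleMeasure n))
      = ∫ θ, (∑ f : Fin n → Fin n, (∏ i, A i (f i)) *
          ∏ j, G ((Finset.univ.filter fun i => f i = j).card) (θ j)) ∂(circleMeasure n) := by
        exact integral_congr_ae (Filter.Eventually.of_forall fun θ => hpt A θ)
    _ = ∑ f : Fin n → Fin n, ∫ θ, (∏ i, A i (f i)) *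
          ∏ j, G ((Finset.univ.filter fun i => f i = j).card) (θ j) ∂(circleMeasure n) :=
        integral_finset_sum _ (fun f _ => hint f)
    _ = ∑ f : Fin n → Fin n, (∏ i, A i (f i)) *
          ∏ j, ∫ t : UI, G ((Finset.univ.filter fun i => f i = j).card) t := by
        refine Finset.sum_congr rfl fun f _ => ?_
        rw [MeasureTheory.integral_const_mul]
        congr 1
        have h := @MeasureTheory.integral_fintype_prod_eq_prod ℂ (Fin n) _ _ (fun _ => UI)
          (fun j => G ((Finset.univ.filter fun i => f i = j).card))
          (fun _ => MeasureSpace.toMeasurableSpace) (fun _ => volume) (fun _ => inferInstance)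
        exact h
    _ = ∑ f : Fin n → Fin n, (∏ i, A i (f i)) *
          (if Function.Bijective f then (1:ℂ) else 0) := by
        refine Finset.sum_congr rfl fun f _ => ?_
        congr 1
        rw [Finset.prod_congr rfl (fun j _ => int_G _), Finset.prod_boole]
        simp only [Finset.mem_univ, true_implies, fiber_card_bij f]
    _ = perm A := sum_bijective_eq_perm A

/-- `|perm A| ≤ E[(‖AX‖₁/n)^n]` for X i.i.d. uniform on the unit circle. -/
theorem perm_le_expectation_l1 {n : ℕ} (A : Matrix (Fin n) (Fin n) ℂ) :
    ‖perm A‖ ≤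
      ∫ θ, ((∑ i, ‖(A.mulVec (Xc θ)) i‖) / n) ^ n ∂(circleMeasure n) := by
  classical
  have hRHS : Integrable (fun θ : Fin n → ℝ =>
      ((∑ i, ‖(A.mulVec (Xc θ)) i‖) / n) ^ n) (circleMeasure n) := by
    have hmeas : Measurable (fun θ : Fin n → ℝ =>
        ((∑ i, ‖(A.mulVec (Xc θ)) i‖) / n) ^ n) := by
      show Measurable fun θ : Fin n → ℝ =>
        ((∑ i, ‖∑ j, A i j * ez (θ j)‖) / (n : ℝ)) ^ n
      refine Measurable.pow_const (Measurable.div_const ?_ _) n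
      refine Finset.measurable_sum _ fun i _ => ?_
      refine continuous_norm.measurable.comp ?_
      exact Finset.measurable_sum _ fun j _ =>
        (ez_measurable.comp (measurable_pi_apply j)).const_mul _
    refine Integrable.mono' (integrable_const (((∑ i, ∑ j, ‖A i j‖) / n) ^ n))
      hmeas.aestronglyMeasurable ?_
    filter_upwards with θ
    have hb : ∀ i, ‖(A.mulVec (Xc θ)) i‖ ≤ ∑ j, ‖A i j‖ := by
      intro i
      show ‖∑ j, A i j * ez (θ j)‖ ≤ _
      refine (norm_sum_le _ _).trans ?_
      refine Finset.sum_le_sum fun j _ => ?_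
      rw [norm_mul, abs_ez, mul_one]
    have h0 : 0 ≤ ∑ i, ‖(A.mulVec (Xc θ)) i‖ :=
      Finset.sum_nonneg fun i _ => norm_nonneg _
    rw [Real.norm_eq_abs, abs_of_nonneg (by positivity)]
    refine pow_le_pow_left₀ (by positivity) ?_ n
    rw [div_eq_mul_inv, div_eq_mul_inv]
    refine mul_le_mul_of_nonneg_right ?_ (by positivity)
    exact Finset.sum_le_sum fun i _ => hb i
  calc ‖perm A‖
      = ‖∫ θ, ∏ i, (starRingEnd ℂ) (Xc θ i) * (A.mulVec (Xc θ)) i ∂(circleMeasure n)‖ := by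
        rw [key A]
    _ ≤ ∫ θ, ‖∏ i, (starRingEnd ℂ) (Xc θ i) * (A.mulVec (Xc θ)) i‖ ∂(circleMeasure n) :=
        norm_integral_le_integral_norm _
    _ ≤ ∫ θ, ((∑ i, ‖(A.mulVec (Xc θ)) i‖) / n) ^ n ∂(circleMeasure n) := by
        refine integral_mono_of_nonneg (Filter.Eventually.of_forall fun θ => norm_nonneg _)
          hRHS (Filter.Eventually.of_forall fun θ => ?_)
        show ‖∏ i, (starRingEnd ℂ) (Xc θ i) * (A.mulVec (Xc θ)) i‖ ≤
          ((∑ i, ‖(A.mulVec (Xc θ)) i‖) / n) ^ n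
        have heq : ∀ i : Fin n, ‖(starRingEnd ℂ) (Xc θ i) * (A.mulVec (Xc θ)) i‖
            = ‖(A.mulVec (Xc θ)) i‖ := by
          intro i
          rw [norm_mul]
          show ‖(starRingEnd ℂ) (ez (θ i))‖ * _ = _
          simp only [Complex.norm_conj, abs_ez, one_mul]
        rw [norm_prod, Finset.prod_congr rfl fun i _ => heq i]
        exact amgm _ (fun i => norm_nonneg _)
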